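/- A (T+1)-layered linear deterministic network N over 𝔽_p is linearly solvable if and only if its reciprocal network N′ is linearly solvable. Equivalently, a rate tuple (w_1 log p, …, w_n log p) is achievable by linear coding on N if and only if it is achievable by linear coding on N′. -/

import Mathlib

open Matrix

/-!
A `(T+1)`-layered linear deterministic network over `𝔽_p = ZMod p`.
Layer `m` (for `0 ≤ m ≤ T`) has a finite set of vertices `V m`; the field `V` is
indexed by all of `ℕ` for convenience, but only layers `0,…,T` play a role.
`G m i j` is the channel gain matrix on the edge from node `i` in layer `m`
to node `j` in layer `m+1` (it is the zero matrix when there is no edge);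
only `m < T` is relevant.  There are `n` unicast messages; message `k` has
length `w k`, source node `src k` in layer `0` and destination node `dst k`
in layer `T`.
-/
structure LayeredNetwork (p q T n : ℕ) where
  V : ℕ → Type
  fintypeV : ∀ m, Fintype (V m)
  decEqV : ∀ m, DecidableEq (V m)
  G : (m : ℕ) → V m → V (m + 1) → Matrix (Fin q) (Fin q) (ZMod p)
  w : Fin n → ℕ
  src : Fin n → V 0
  dst : Fin n → V T

attribute [instance] LayeredNetwork.fintypeV LayeredNetwork.decEqV

/-- A linear coding scheme: encoding matrices `C k` at the sources, relay
matrices `F m j` at the intermediate nodes (only layers `1,…,T-1` are relevant),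
and decoding matrices `D k` at the destinations. -/
structure Scheme {p q T n : ℕ} (N : LayeredNetwork p q T n) where
  C : (k : Fin n) → Matrix (Fin q) (Fin (N.w k)) (ZMod p)
  F : (m : ℕ) → N.V m → Matrix (Fin q) (Fin q) (ZMod p)
  D : (k : Fin n) → Matrix (Fin (N.w k)) (Fin q) (ZMod p)

variable {p q T n : ℕ} {N : LayeredNetwork p q T n}

/-- A tuple of messages `W k ∈ 𝔽_p^{w k}`. -/
def Msg (N : LayeredNetwork p q T n) : Type :=
  (k : Fin n) → Fin (N.w k) → ZMod p

/-- The signal transmitted by each node: a source node `j` (layer `0`) sends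
`x_j = ∑_{k : src k = j} C_k W_k`; a node `j` in layer `m+1` sends
`x_j = F_j y_j` where `y_j = ∑_i G_{ij} x_i` is its received signal. -/
def xSig (S : Scheme N) (W : Msg N) : (m : ℕ) → N.V m → (Fin q → ZMod p)
  | 0, j => ∑ k : Fin n, if N.src k = j then (S.C k).mulVec (W k) else 0
  | m + 1, j => (S.F (m + 1) j).mulVec (∑ i : N.V m, (N.G m i j).mulVec (xSig S W m i))

/-- The signal received by a node `j` in layer `m ≥ 1`: `y_j = ∑_i G_{ij} x_i`. -/
def ySig (S : Scheme N) (W : Msg N) : (m : ℕ) → N.V m → (Fin q → ZMod p)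
  | 0, _ => 0
  | m + 1, j => ∑ i : N.V m, (N.G m i j).mulVec (xSig S W m i)

/-- The reconstructed message `Ŵ_k = D_k y_{dst k}` at the destination of message `k`. -/
def decode (S : Scheme N) (W : Msg N) (k : Fin n) : Fin (N.w k) → ZMod p :=
  (S.D k).mulVec (ySig S W T (N.dst k))

/-- The scheme linearly solves the network: `Ŵ_k = W_k` for every choice of messages. -/
def Solves (N : LayeredNetwork p q T n) (S : Scheme N) : Prop :=
  ∀ (W : Msg N) (k : Fin n), decode S W k = W k

/-- The network is linearly solvable: some linear coding scheme solves it. -/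
def LinearlySolvable (N : LayeredNetwork p q T n) : Prop :=
  ∃ S : Scheme N, Solves N S

/-- The reciprocal network: the layers in reversed order (layer `m` of the
reciprocal is layer `T - m` of `N`), the channel gain matrix on each reversed
edge is the transpose of the original one, and for every message the roles of
the source and the destination are swapped. -/
def LayeredNetwork.reciprocal (N : LayeredNetwork p q T n) : LayeredNetwork p q T n where
  V := fun m => N.V (T - m)
  fintypeV := fun m => N.fintypeV (T - m)
  decEqV := fun m => N.decEqV (T - m)
  G := fun m j i =>
    if h : m < T then
      (N.G (T - m - 1) i (cast (congrArg N.V (by omega : T - m = T - m - 1 + 1)) j))ᵀ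
    else 0
  w := N.w
  src := N.dst
  dst := fun k => cast (congrArg N.V (by omega : (0 : ℕ) = T - T)) (N.src k)

section RecipAux

lemma LayeredNetwork.G_congr' (N : LayeredNetwork p q T n) {a b : ℕ} (h : a = b)
    {i : N.V a} {i' : N.V b} {j : N.V (a + 1)} {j' : N.V (b + 1)}
    (hi : HEq i i') (hj : HEq j j') : N.G a i j = N.G b i' j' := by
  subst h; rw [eq_of_heq hi, eq_of_heq hj]

lemma Scheme.F_congr' (S : Scheme N) {a b : ℕ} (h : a = b)
    {j : N.V a} {j' : N.V b} (hj : HEq j j') : S.F a j = S.F b j' := by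
  subst h; rw [eq_of_heq hj]

/-- Transfer matrix from message `k` to the transmitted signal of node `j` in layer `m`. -/
def Xm (S : Scheme N) (k : Fin n) : (m : ℕ) → N.V m → Matrix (Fin q) (Fin (N.w k)) (ZMod p)
  | 0, j => if N.src k = j then S.C k else 0
  | m + 1, j => S.F (m + 1) j * ∑ i : N.V m, N.G m i j * Xm S k m i

/-- Transfer matrix from message `k` to the received signal of node `j` in layer `m`. -/
def Ym (S : Scheme N) (k : Fin n) : (m : ℕ) → N.V m → Matrix (Fin q) (Fin (N.w k)) (ZMod p)
  | 0, _ => 0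
  | m + 1, j => ∑ i : N.V m, N.G m i j * Xm S k m i

private lemma mulVec_sum' {α β : Type*} [Fintype β] (A : Matrix (Fin q) β (ZMod p))
    (s : Finset α) (f : α → β → ZMod p) :
    A *ᵥ (∑ i ∈ s, f i) = ∑ i ∈ s, A *ᵥ f i := by
  rw [← Matrix.mulVecLin_apply, map_sum]; simp [Matrix.mulVecLin_apply]

private lemma sum_mulVec' {α β : Type*} [Fintype β] (s : Finset α)
    (f : α → Matrix (Fin q) β (ZMod p)) (v : β → ZMod p) :
    (∑ i ∈ s, f i) *ᵥ v = ∑ i ∈ s, f i *ᵥ v := by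
  induction s using Finset.cons_induction with
  | empty => simp
  | cons a s ha ih => simp [Matrix.add_mulVec, ih]

lemma xSig_eq (S : Scheme N) (W : Msg N) :
    ∀ (m : ℕ) (j : N.V m), xSig S W m j = ∑ k : Fin n, (Xm S k m j) *ᵥ (W k)
  | 0, j => by
    simp only [xSig, Xm]
    refine Finset.sum_congr rfl fun k _ => ?_
    split <;> simp
  | m + 1, j => by
    simp only [xSig, Xm]
    have h1 : ∀ i : N.V m, (N.G m i j) *ᵥ (xSig S W m i)
        = ∑ k : Fin n, (N.G m i j * Xm S k m i) *ᵥ W k := by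
      intro i
      rw [xSig_eq S W m i, mulVec_sum']
      simp [Matrix.mulVec_mulVec]
    simp only [h1]
    rw [Finset.sum_comm, mulVec_sum']
    refine Finset.sum_congr rfl fun k _ => ?_
    rw [← Matrix.mulVec_mulVec, sum_mulVec']

lemma ySig_eq (S : Scheme N) (W : Msg N) (m : ℕ) (j : N.V (m + 1)) :
    ySig S W (m + 1) j = ∑ k : Fin n, (Ym S k (m + 1) j) *ᵥ (W k) := by
  simp only [ySig, Ym]
  have h1 : ∀ i : N.V m, (N.G m i j) *ᵥ (xSig S W m i)
      = ∑ k : Fin n, (N.G m i j * Xm S k m i) *ᵥ W k := by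
    intro i
    rw [xSig_eq S W m i, mulVec_sum']
    simp [Matrix.mulVec_mulVec]
  simp only [h1]
  rw [Finset.sum_comm]
  refine Finset.sum_congr rfl fun k _ => ?_
  rw [sum_mulVec']

/-- End-to-end transfer matrix from message `l` to decoder `k`. -/
def Mm (S : Scheme N) (k l : Fin n) : Matrix (Fin (N.w k)) (Fin (N.w l)) (ZMod p) :=
  S.D k * Ym S l T (N.dst k)

lemma decode_eq (hT : 1 ≤ T) (S : Scheme N) (W : Msg N) (k : Fin n) :
    decode S W k = ∑ l : Fin n, (Mm S k l) *ᵥ (W l) := by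
  obtain ⟨t, rfl⟩ : ∃ t, T = t + 1 := ⟨T - 1, by omega⟩
  unfold decode Mm
  rw [ySig_eq, mulVec_sum']
  simp [Matrix.mulVec_mulVec]

end RecipAux

section RecipAux2

private lemma eq_one_of_mulVec {m : ℕ} {A : Matrix (Fin m) (Fin m) (ZMod p)}
    (h : ∀ v : Fin m → ZMod p, A *ᵥ v = v) : A = 1 := by
  ext i j
  have := congrFun (h (Pi.single j 1)) i
  simp only [Matrix.mulVec_single, mul_one, MulOpposite.op_one, one_smul, Matrix.col_apply] at this
  rw [this, Matrix.one_apply]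
  simp [Pi.single_apply, eq_comm]

private lemma eq_zero_of_mulVec {m m' : ℕ} {A : Matrix (Fin m) (Fin m') (ZMod p)}
    (h : ∀ v : Fin m' → ZMod p, A *ᵥ v = 0) : A = 0 := by
  ext i j
  have := congrFun (h (Pi.single j 1)) i
  simpa using this

/-- The unit message tuple concentrated at `l`. -/
private def unitMsg (N : LayeredNetwork p q T n) (l : Fin n) (v : Fin (N.w l) → ZMod p) :
    Msg N := Function.update (fun _ _ => 0) l v

private lemma unitMsg_self (l : Fin n) (v : Fin (N.w l) → ZMod p) :
    unitMsg N l v l = v := by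
  simp only [unitMsg]
  exact Function.update_self (β := fun k => Fin (N.w k) → ZMod p) l v _

private lemma unitMsg_ne {l l' : Fin n} (h : l ≠ l') (v : Fin (N.w l) → ZMod p) :
    unitMsg N l v l' = 0 := by
  simp only [unitMsg]
  exact Function.update_of_ne (β := fun k => Fin (N.w k) → ZMod p) (Ne.symm h) v _

lemma solves_iff (hT : 1 ≤ T) (S : Scheme N) :
    Solves N S ↔ (∀ k, Mm S k k = 1) ∧ (∀ k l, k ≠ l → Mm S k l = 0) := by
  constructor
  · intro h
    constructor
    · intro k
      refine eq_one_of_mulVec fun v => ?_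
      have hd := h (unitMsg N k v) k
      rw [decode_eq hT, Finset.sum_eq_single k] at hd
      · rwa [unitMsg_self] at hd
      · intro l _ hl
        rw [unitMsg_ne (Ne.symm hl), Matrix.mulVec_zero]
      · simp
    · intro k l hkl
      refine eq_zero_of_mulVec fun v => ?_
      have hd := h (unitMsg N l v) k
      rw [decode_eq hT, Finset.sum_eq_single l] at hd
      · rwa [unitMsg_self, unitMsg_ne (Ne.symm hkl)] at hd
      · intro l' _ hl'
        rw [unitMsg_ne (Ne.symm hl'), Matrix.mulVec_zero]
      · simp
  · rintro ⟨h1, h2⟩ W k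
    rw [decode_eq hT, Finset.sum_eq_single k]
    · rw [h1, Matrix.one_mulVec]
    · intro l _ hl
      rw [h2 k l (Ne.symm hl), Matrix.zero_mulVec]
    · simp

end RecipAux2

section RecipAux3

lemma Ym_cast (S : Scheme N) (k : Fin n) {m m' : ℕ} (h : m = m' + 1) (j : N.V m) :
    Ym S k m j = ∑ i : N.V m', N.G m' i (cast (congrArg N.V h) j) * Xm S k m' i := by
  subst h
  simp only [Ym]
  exact Finset.sum_congr rfl fun i _ => by rw [eq_of_heq (cast_heq _ j)]

lemma Xm_of_pos (S : Scheme N) (k : Fin n) {m : ℕ} (h : 1 ≤ m) (j : N.V m) :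
    Xm S k m j = S.F m j * Ym S k m j := by
  obtain ⟨m', rfl⟩ : ∃ m', m = m' + 1 := ⟨m - 1, by omega⟩
  simp only [Xm, Ym]

lemma Xm_congr {S1 S2 : Scheme N} (hC : ∀ k, S1.C k = S2.C k)
    (hF : ∀ (m : ℕ) (j : N.V m), 1 ≤ m → m ≤ T - 1 → S1.F m j = S2.F m j) :
    ∀ (m : ℕ), m ≤ T - 1 → ∀ (j : N.V m) (k : Fin n), Xm S1 k m j = Xm S2 k m j := by
  intro m
  induction m with
  | zero => intro _ j k; simp only [Xm, hC]
  | succ m ih =>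
    intro hm j k
    simp only [Xm, hF (m + 1) j (by omega) hm]
    congr 1
    exact Finset.sum_congr rfl fun i _ => by rw [ih (by omega) i k]

lemma Mm_congr (hT : 1 ≤ T) {S1 S2 : Scheme N} (hC : ∀ k, S1.C k = S2.C k)
    (hD : ∀ k, S1.D k = S2.D k)
    (hF : ∀ (m : ℕ) (j : N.V m), 1 ≤ m → m ≤ T - 1 → S1.F m j = S2.F m j)
    (k l : Fin n) : Mm S1 k l = Mm S2 k l := by
  have ht : T = (T - 1) + 1 := by omega
  unfold Mm
  rw [hD, Ym_cast S1 l ht, Ym_cast S2 l ht]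
  congr 1
  exact Finset.sum_congr rfl fun i _ => by
    rw [Xm_congr hC hF (T - 1) le_rfl i l]

/-- The transposed scheme on the reciprocal network. -/
def sigmaScheme (S : Scheme N) : Scheme N.reciprocal where
  C k := (S.D k)ᵀ
  F m j := (S.F (T - m) j)ᵀ
  D k := (S.C k)ᵀ

/-- The transposed scheme pulled back from the reciprocal network. -/
def tauScheme (S' : Scheme N.reciprocal) : Scheme N where
  C k := (S'.D k)ᵀ
  F m j := if h : m ≤ T then
      (S'.F (T - m) (cast (congrArg N.V (by omega : m = T - (T - m))) j))ᵀ
    else 1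
  D k := (S'.C k)ᵀ

/-- The "meet in the middle" partial sum. -/
def invSum (S : Scheme N) (k l : Fin n) (d : ℕ) :
    Matrix (Fin (N.w l)) (Fin (N.w k)) (ZMod p) :=
  ∑ j : N.reciprocal.V d, (Xm (sigmaScheme S) l d j)ᵀ * Ym S k (T - d) j

lemma invSum_zero (S : Scheme N) (k l : Fin n) : invSum S k l 0 = Mm S l k := by
  unfold invSum Mm
  have h : ∀ j : N.reciprocal.V 0, (Xm (sigmaScheme S) l 0 j)ᵀ * Ym S k (T - 0) j
      = if N.reciprocal.src l = j then S.D l * Ym S k (T - 0) j else 0 := by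
    intro j
    have hx : Xm (sigmaScheme S) l 0 j = if N.reciprocal.src l = j then (S.D l)ᵀ else 0 := rfl
    rw [hx]
    split
    · rfl
    · exact Matrix.zero_mul _
  simp only [h]
  rw [Finset.sum_ite_eq]
  simp; rfl

lemma invSum_step (S : Scheme N) (k l : Fin n) (d : ℕ) (hd : d + 2 ≤ T) :
    invSum S k l (d + 1) = invSum S k l d := by
  have hdT : d < T := by omega
  have h1 : (1 : ℕ) ≤ T - d - 1 := by omega
  have hy : T - d = (T - d - 1) + 1 := by omega
  have e1 : ∀ j : N.reciprocal.V d, Ym S k (T - d) j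
      = ∑ j' : N.V (T - d - 1), N.G (T - d - 1) j' (cast (congrArg N.V hy) j) *
          (S.F (T - d - 1) j' * Ym S k (T - d - 1) j') := by
    intro j
    rw [Ym_cast S k hy j]
    exact Finset.sum_congr rfl fun j' _ => by rw [Xm_of_pos S k h1 j']
  have e2 : ∀ j' : N.reciprocal.V (d + 1), (Xm (sigmaScheme S) l (d + 1) j')ᵀ
      = (∑ i : N.reciprocal.V d,
          (Xm (sigmaScheme S) l d i)ᵀ * N.G (T - d - 1) j' (cast (congrArg N.V hy) i))
        * S.F (T - d - 1) j' := by
    intro j'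
    have hx : Xm (sigmaScheme S) l (d + 1) j' = (S.F (T - d - 1) j')ᵀ *
        ∑ i : N.reciprocal.V d,
          (N.G (T - d - 1) j' (cast (congrArg N.V hy) i))ᵀ * Xm (sigmaScheme S) l d i := by
      simp only [Xm]
      congr 1
      refine Finset.sum_congr rfl fun i _ => ?_
      congr 1
      show N.reciprocal.G d i j' = _
      simp only [LayeredNetwork.reciprocal]
      rw [dif_pos hdT]
    rw [hx, Matrix.transpose_mul, Matrix.transpose_sum, Matrix.transpose_transpose]
    congr 1
    refine Finset.sum_congr rfl fun i _ => ?_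
    rw [Matrix.transpose_mul, Matrix.transpose_transpose]
  unfold invSum
  calc (∑ j' : N.reciprocal.V (d + 1),
        (Xm (sigmaScheme S) l (d + 1) j')ᵀ * Ym S k (T - (d + 1)) j')
      = ∑ j' : N.reciprocal.V (d + 1), ∑ i : N.reciprocal.V d,
          (Xm (sigmaScheme S) l d i)ᵀ * N.G (T - d - 1) j' (cast (congrArg N.V hy) i) *
            (S.F (T - d - 1) j' * Ym S k (T - d - 1) j') := by
        refine Finset.sum_congr rfl fun j' _ => ?_
        rw [e2 j', Matrix.mul_assoc, Matrix.sum_mul]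
        rfl
    _ = ∑ i : N.reciprocal.V d, ∑ j' : N.reciprocal.V (d + 1),
          (Xm (sigmaScheme S) l d i)ᵀ * N.G (T - d - 1) j' (cast (congrArg N.V hy) i) *
            (S.F (T - d - 1) j' * Ym S k (T - d - 1) j') := Finset.sum_comm
    _ = ∑ i : N.reciprocal.V d, (Xm (sigmaScheme S) l d i)ᵀ * Ym S k (T - d) i := by
        refine Finset.sum_congr rfl fun i _ => ?_
        rw [e1 i, Matrix.mul_sum]
        refine Finset.sum_congr rfl fun j' _ => ?_
        rw [Matrix.mul_assoc]

lemma Mm_sigma_top (hT : 1 ≤ T) (S : Scheme N) (k l : Fin n) :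
    (Mm (sigmaScheme S) k l)ᵀ = invSum S k l (T - 1) := by
  have ht : T = (T - 1) + 1 := by omega
  have h01 : T - (T - 1) = 0 + 1 := by omega
  have hy : ∀ j : N.reciprocal.V (T - 1),
      Ym S k (T - (T - 1)) j = N.G 0 (N.src k) (cast (congrArg N.V h01) j) * S.C k := by
    intro j
    rw [Ym_cast S k h01 j]
    have hterm : ∀ i0 : N.V 0, N.G 0 i0 (cast (congrArg N.V h01) j) * Xm S k 0 i0
        = if N.src k = i0 then N.G 0 i0 (cast (congrArg N.V h01) j) * S.C k else 0 := by
      intro i0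
      have hx : Xm S k 0 i0 = if N.src k = i0 then S.C k else 0 := rfl
      rw [hx]
      split <;> simp
    simp only [hterm]
    rw [Finset.sum_ite_eq]
    simp
  have hgg : ∀ i : N.reciprocal.V (T - 1),
      N.reciprocal.G (T - 1) i (cast (congrArg N.reciprocal.V ht) (N.reciprocal.dst k))
      = (N.G 0 (N.src k) (cast (congrArg N.V h01) i))ᵀ := by
    intro i
    show dite _ _ _ = _
    rw [dif_pos (show T - 1 < T by omega)]
    refine congrArg Matrix.transpose ?_
    refine N.G_congr' (by omega) ?_ ?_
    · exact (cast_heq _ _).trans (cast_heq _ _)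
    · exact (cast_heq _ _).trans ((cast_heq _ _).symm)
  unfold Mm invSum
  rw [Ym_cast (sigmaScheme S) l ht]
  rw [Matrix.transpose_mul, Matrix.transpose_sum, Matrix.sum_mul]
  refine Finset.sum_congr rfl fun i _ => ?_
  rw [hgg i, hy i, Matrix.transpose_mul, Matrix.transpose_transpose, Matrix.mul_assoc]
  rfl

lemma key_lemma (hT : 1 ≤ T) (S : Scheme N) (k l : Fin n) :
    Mm (sigmaScheme S) k l = (Mm S l k)ᵀ := by
  have hchain : ∀ d, d ≤ T - 1 → invSum S k l d = Mm S l k := by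
    intro d
    induction d with
    | zero => intro _; exact invSum_zero S k l
    | succ d ih =>
      intro hd
      rw [invSum_step S k l d (by omega)]
      exact ih (by omega)
  calc Mm (sigmaScheme S) k l = ((Mm (sigmaScheme S) k l)ᵀ)ᵀ := by
        rw [Matrix.transpose_transpose]
    _ = ((Mm S l k)ᵀ : Matrix (Fin (N.reciprocal.w k)) (Fin (N.reciprocal.w l)) (ZMod p)) := by rw [Mm_sigma_top hT S k l, hchain (T - 1) le_rfl]

end RecipAux3

/-- **Reciprocity of linear solvability.**  A `(T+1)`-layered linear
deterministic network `N` over `𝔽_p` is linearly solvable if and only if its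
reciprocal network `N′` is linearly solvable.  (Equivalently, the rate tuple
`(w 1 · log p, …, w n · log p)` is achievable by linear coding on `N` iff it is
achievable by linear coding on `N′`: the message lengths `w` of `N` and of
`N.reciprocal` are the same.) -/
theorem linearlySolvable_iff_reciprocal [Fact p.Prime]
    (hq : 1 ≤ q) (hT : 1 ≤ T) (hn : 1 ≤ n) (hw : ∀ k, 1 ≤ N.w k) :
    LinearlySolvable N ↔ LinearlySolvable N.reciprocal := by
  constructor
  · rintro ⟨S, hS⟩
    refine ⟨sigmaScheme S, ?_⟩
    rw [solves_iff hT] at hS ⊢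
    obtain ⟨h1, h2⟩ := hS
    refine ⟨fun k => ?_, fun k l hkl => ?_⟩
    · rw [key_lemma hT S k k, h1 k, Matrix.transpose_one]; rfl
    · rw [key_lemma hT S k l, h2 l k (Ne.symm hkl), Matrix.transpose_zero]; rfl
  · rintro ⟨S', hS'⟩
    refine ⟨tauScheme S', ?_⟩
    rw [solves_iff hT] at hS' ⊢
    obtain ⟨h1, h2⟩ := hS'
    have hcong : ∀ k l, Mm (sigmaScheme (tauScheme S')) k l = Mm S' k l := by
      intro k l
      refine Mm_congr hT ?_ ?_ ?_ k l
      · intro k'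
        exact Matrix.transpose_transpose _
      · intro k'
        exact Matrix.transpose_transpose _
      · intro m j hm1 hm2
        have hmT : T - m ≤ T := by omega
        simp only [sigmaScheme, tauScheme]
        rw [dif_pos hmT, Matrix.transpose_transpose]
        exact S'.F_congr' (by omega : T - (T - m) = m) (cast_heq _ _)
    refine ⟨fun k => ?_, fun k l hkl => ?_⟩
    · have h := key_lemma hT (tauScheme S') k k
      rw [hcong k k, h1 k] at h
      calc Mm (tauScheme S') k k = ((Mm (tauScheme S') k k)ᵀ)ᵀ :=
            (Matrix.transpose_transpose _).symm
        _ = (1 : Matrix (Fin (N.w k)) (Fin (N.w k)) (ZMod p))ᵀ := by rw [← h]; rfl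
        _ = 1 := Matrix.transpose_one
    · have h := key_lemma hT (tauScheme S') l k
      rw [hcong l k, h2 l k (Ne.symm hkl)] at h
      calc Mm (tauScheme S') k l = ((Mm (tauScheme S') k l)ᵀ)ᵀ :=
            (Matrix.transpose_transpose _).symm
        _ = (0 : Matrix (Fin (N.w l)) (Fin (N.w k)) (ZMod p))ᵀ := by rw [← h]; rfl
        _ = 0 := Matrix.transpose_zero
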